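/- Let T be a stress-energy tensor on (N+1)-dimensional Minkowski space satisfying the dominant energy condition, with T ≠ 0. If v and w are future-directed causal vectors with T(v,w) = 0, then at least one of v, w is future-directed lightlike. -/
import Mathlib


open Matrix

/-- The Minkowski metric `diag(-1,1,…,1)` on `ℝ^{N+1}`. -/
noncomputable def eta (N : ℕ) : Matrix (Fin (N+1)) (Fin (N+1)) ℝ :=
  Matrix.diagonal (fun i => if i = 0 then (-1 : ℝ) else 1)

/-- The Minkowski bilinear form `η(x,y) = -x₀y₀ + ∑ᵢ xᵢyᵢ`. -/
noncomputable def mdot {N : ℕ} (x y : Fin (N+1) → ℝ) : ℝ :=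
  x ⬝ᵥ (eta N).mulVec y

/-- Future-directed timelike: `η(v,v) < 0` and `v₀ > 0`. -/
def FDTimelike {N : ℕ} (v : Fin (N+1) → ℝ) : Prop :=
  mdot v v < 0 ∧ 0 < v 0

/-- Future-directed lightlike: `v ≠ 0`, `η(v,v) = 0` and `v₀ > 0`. -/
def FDLightlike {N : ℕ} (v : Fin (N+1) → ℝ) : Prop :=
  v ≠ 0 ∧ mdot v v = 0 ∧ 0 < v 0

/-- Future-directed causal: future-directed timelike or lightlike. -/
def FDCausal {N : ℕ} (v : Fin (N+1) → ℝ) : Prop :=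
  FDTimelike v ∨ FDLightlike v

/-- The bilinear form associated to a matrix: `T(v,w) = vᵀ T w`. -/
noncomputable def Tbil {N : ℕ} (T : Matrix (Fin (N+1)) (Fin (N+1)) ℝ)
    (v w : Fin (N+1) → ℝ) : ℝ :=
  v ⬝ᵥ T.mulVec w

/-- The endomorphism associated to a stress-energy tensor: `u(v) = -ηTv`. -/
noncomputable def endo {N : ℕ} (T : Matrix (Fin (N+1)) (Fin (N+1)) ℝ)
    (v : Fin (N+1) → ℝ) : Fin (N+1) → ℝ :=
  -((eta N).mulVec (T.mulVec v))

/-- The dominant energy condition: every future-directed causal vector is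
sent by the associated endomorphism to a future-directed causal vector or zero. -/
def DEC {N : ℕ} (T : Matrix (Fin (N+1)) (Fin (N+1)) ℝ) : Prop :=
  ∀ v : Fin (N+1) → ℝ, FDCausal v → FDCausal (endo T v) ∨ endo T v = 0

/- ### Auxiliary lemmas -/

lemma mdot_expand {N : ℕ} (x y : Fin (N+1) → ℝ) :
    mdot x y = ∑ i, x i * ((if i = 0 then (-1:ℝ) else 1) * y i) := by
  simp [mdot, eta, Matrix.mulVec_diagonal, dotProduct]

lemma mdot_split {N : ℕ} (x y : Fin (N+1) → ℝ) :
    mdot x y = -(x 0 * y 0) + ∑ i ∈ Finset.univ.erase 0, x i * y i := by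
  rw [mdot_expand, ← Finset.add_sum_erase _ _ (Finset.mem_univ 0)]
  congr 1
  · simp [mul_comm]
  · exact Finset.sum_congr rfl fun i hi => by
      rw [if_neg (Finset.ne_of_mem_erase hi), one_mul]

lemma eta_sq {N : ℕ} : eta N * eta N = 1 := by
  rw [eta, Matrix.diagonal_mul_diagonal]
  have : (fun i : Fin (N+1) => (if i = 0 then (-1:ℝ) else 1) * (if i = 0 then (-1:ℝ) else 1))
      = fun _ => (1:ℝ) := by
    funext i; split_ifs <;> norm_num
  rw [this, Matrix.diagonal_one]

lemma eta_invol {N : ℕ} (x : Fin (N+1) → ℝ) :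
    (eta N).mulVec ((eta N).mulVec x) = x := by
  rw [Matrix.mulVec_mulVec, eta_sq, Matrix.one_mulVec]

/-- Spatial part bound for causal vectors. -/
lemma causal_bound {N : ℕ} {y : Fin (N+1) → ℝ} (hy : FDCausal y) :
    0 < y 0 ∧ ∑ i ∈ Finset.univ.erase 0, y i ^ 2 ≤ (y 0) ^ 2 := by
  have h : mdot y y ≤ 0 ∧ 0 < y 0 := by
    rcases hy with ⟨h1, h2⟩ | ⟨_, h1, h2⟩
    · exact ⟨le_of_lt h1, h2⟩
    · exact ⟨le_of_eq h1, h2⟩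
  refine ⟨h.2, ?_⟩
  have := h.1
  rw [mdot_split] at this
  have heq : ∑ i ∈ Finset.univ.erase 0, y i * y i
      = ∑ i ∈ Finset.univ.erase 0, y i ^ 2 := by
    exact Finset.sum_congr rfl fun i _ => (sq (y i)).symm
  nlinarith [this, heq]

lemma timelike_bound {N : ℕ} {x : Fin (N+1) → ℝ} (hx : FDTimelike x) :
    0 < x 0 ∧ ∑ i ∈ Finset.univ.erase 0, x i ^ 2 < (x 0) ^ 2 := by
  refine ⟨hx.2, ?_⟩
  have := hx.1
  rw [mdot_split] at this
  have heq : ∑ i ∈ Finset.univ.erase 0, x i * x i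
      = ∑ i ∈ Finset.univ.erase 0, x i ^ 2 :=
    Finset.sum_congr rfl fun i _ => (sq (x i)).symm
  nlinarith [this, heq]

/-- Key lemma: the Minkowski product of a future timelike vector with a future
causal vector is strictly negative. -/
lemma mdot_neg_of_timelike_causal {N : ℕ} {x y : Fin (N+1) → ℝ}
    (hx : FDTimelike x) (hy : FDCausal y) : mdot x y < 0 := by
  obtain ⟨hx0, hxQ⟩ := timelike_bound hx
  obtain ⟨hy0, hyQ⟩ := causal_bound hy
  rw [mdot_split]
  set s := Finset.univ.erase (0 : Fin (N+1))
  have hCS := Finset.sum_mul_sq_le_sq_mul_sq s x y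
  have hQy0 : (0:ℝ) ≤ ∑ i ∈ s, y i ^ 2 := Finset.sum_nonneg fun i _ => sq_nonneg _
  have hQx0 : (0:ℝ) ≤ ∑ i ∈ s, x i ^ 2 := Finset.sum_nonneg fun i _ => sq_nonneg _
  have h1 : (∑ i ∈ s, x i ^ 2) * (∑ i ∈ s, y i ^ 2) ≤ (∑ i ∈ s, x i ^ 2) * y 0 ^ 2 :=
    mul_le_mul_of_nonneg_left hyQ hQx0
  have h2 : (∑ i ∈ s, x i ^ 2) * y 0 ^ 2 < x 0 ^ 2 * y 0 ^ 2 :=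
    mul_lt_mul_of_pos_right hxQ (pow_pos hy0 2)
  have hP2 : (∑ i ∈ s, x i * y i) ^ 2 < (x 0 * y 0) ^ 2 := by nlinarith
  nlinarith [hP2, mul_pos hx0 hy0]

lemma mdot_endo {N : ℕ} (T : Matrix (Fin (N+1)) (Fin (N+1)) ℝ)
    (a b : Fin (N+1) → ℝ) : mdot a (endo T b) = -(Tbil T a b) := by
  rw [mdot, endo, Matrix.mulVec_neg, eta_invol, dotProduct_neg, Tbil]

lemma endo_eq_zero {N : ℕ} {T : Matrix (Fin (N+1)) (Fin (N+1)) ℝ}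
    {b : Fin (N+1) → ℝ} (h : endo T b = 0) : T.mulVec b = 0 := by
  have : (eta N).mulVec (T.mulVec b) = 0 := by
    have := congrArg Neg.neg h
    rwa [endo, neg_neg, neg_zero] at this
  calc T.mulVec b = (eta N).mulVec ((eta N).mulVec (T.mulVec b)) := (eta_invol _).symm
    _ = 0 := by rw [this, Matrix.mulVec_zero]

lemma Tbil_comm {N : ℕ} {T : Matrix (Fin (N+1)) (Fin (N+1)) ℝ} (hsymm : T.IsSymm)
    (a b : Fin (N+1) → ℝ) : Tbil T a b = Tbil T b a := by
  rw [Tbil, Tbil, Matrix.dotProduct_mulVec, ← Matrix.mulVec_transpose, hsymm.eq,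
    dotProduct_comm]

/-- If `T` annihilates all future timelike vectors, then `T = 0`. -/
lemma eq_zero_of_timelike_ker {N : ℕ} {T : Matrix (Fin (N+1)) (Fin (N+1)) ℝ}
    (h : ∀ x : Fin (N+1) → ℝ, FDTimelike x → T.mulVec x = 0) : T = 0 := by
  have key : ∀ j : Fin (N+1), T.mulVec (fun i => if i = j then (1:ℝ) else 0) = 0 := by
    intro j
    set e0 : Fin (N+1) → ℝ := fun i => if i = 0 then 1 else 0 with he0
    set d : Fin (N+1) → ℝ := fun i => if i = j then 1 else 0 with hd
    have te0 : FDTimelike e0 := by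
      constructor
      · rw [mdot_split]
        have : ∑ i ∈ Finset.univ.erase 0, e0 i * e0 i = 0 := by
          apply Finset.sum_eq_zero
          intro i hi
          simp [he0, Finset.ne_of_mem_erase hi]
        rw [this]; norm_num [he0]
      · norm_num [he0]
    set g : Fin (N+1) → ℝ := fun i => e0 i + (1/2) * d i with hg
    have tg : FDTimelike g := by
      constructor
      · rw [mdot_split]
        by_cases hj : j = 0
        · have hsum : ∑ i ∈ Finset.univ.erase 0, g i * g i = 0 := by
            apply Finset.sum_eq_zero
            intro i hi
            have hi0 := Finset.ne_of_mem_erase hi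
            simp [hg, he0, hd, hi0, hj]
          rw [hsum]
          simp only [hg, he0, hd, hj]
          norm_num
        · have hsum : ∑ i ∈ Finset.univ.erase 0, g i * g i = 1/4 := by
            rw [Finset.sum_eq_single j]
            · simp [hg, he0, hd, hj]; norm_num
            · intro i hi hij
              have hi0 := Finset.ne_of_mem_erase hi
              simp [hg, he0, hd, hi0, hij]
            · intro hj'
              exact absurd (Finset.mem_erase.mpr ⟨hj, Finset.mem_univ j⟩) hj'
          rw [hsum]
          have : g 0 = 1 := by simp [hg, he0, hd, Ne.symm hj]
          rw [this]; norm_num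
      · have : (0:ℝ) < 1 + (1/2) * d 0 := by
          by_cases hj : (0:Fin (N+1)) = j <;> simp [hd, hj] <;> norm_num
        simpa [hg, he0] using this
    have hge : g = e0 + (1/2 : ℝ) • d := by
      funext i; simp [hg, smul_eq_mul]
    have h1 : T.mulVec g = 0 := h g tg
    have h2 : T.mulVec e0 = 0 := h e0 te0
    rw [hge, Matrix.mulVec_add, Matrix.mulVec_smul, h2] at h1
    have h3 : (1/2 : ℝ) • T.mulVec d = 0 := by
      simpa using h1
    have h4 : T.mulVec d = 0 := by
      have := congrArg (fun z => (2:ℝ) • z) h3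
      simpa [smul_smul] using this
    simpa [hd] using h4
  ext i j
  have := congrFun (key j) i
  simp only [Matrix.mulVec, dotProduct, mul_ite, mul_one, mul_zero,
    Finset.sum_ite_eq', Finset.mem_univ, if_true, Pi.zero_apply] at this
  simpa using this

/-- Under the dominant energy condition with `T ≠ 0`, if `T(v,w) = 0` for two
future-directed causal vectors then at least one of them is lightlike. -/
theorem dec_zero_implies_lightlike {N : ℕ} (hN : 1 ≤ N)
    (T : Matrix (Fin (N+1)) (Fin (N+1)) ℝ) (hsymm : T.IsSymm)
    (hdec : DEC T) (hT : T ≠ 0)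
    (v w : Fin (N+1) → ℝ) (hv : FDCausal v) (hw : FDCausal w)
    (hvw : Tbil T v w = 0) :
    FDLightlike v ∨ FDLightlike w := by
  by_contra hcon
  push_neg at hcon
  obtain ⟨hnv, hnw⟩ := hcon
  have htv : FDTimelike v := by rcases hv with h | h; exact h; exact absurd h hnv
  have htw : FDTimelike w := by rcases hw with h | h; exact h; exact absurd h hnw
  -- Step 1: endo T w = 0, so T.mulVec w = 0
  have hTw : T.mulVec w = 0 := by
    rcases hdec w hw with hc | hz
    · exfalso
      have := mdot_neg_of_timelike_causal htv hc
      rw [mdot_endo, hvw] at this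
      norm_num at this
    · exact endo_eq_zero hz
  -- Step 2: T annihilates every future timelike vector
  have hker : ∀ x : Fin (N+1) → ℝ, FDTimelike x → T.mulVec x = 0 := by
    intro x htx
    have hTwx : Tbil T w x = 0 := by
      rw [Tbil_comm hsymm, Tbil, hTw, dotProduct_zero]
    rcases hdec x (Or.inl htx) with hc | hz
    · exfalso
      have := mdot_neg_of_timelike_causal htw hc
      rw [mdot_endo, hTwx] at this
      norm_num at this
    · exact endo_eq_zero hz
  exact hT (eq_zero_of_timelike_ker hker)
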